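/- In the setting of the dimension embedding reduction, let S be a solution of I(Π,F), let T = {ℓ ∈ [r] : Σ_{(v,σ)∈S} J(ℓ,v) = N_ℓ}, for j ∈ D let ℓ(j) denote the unique index with j ∈ D_{ℓ(j)}, and let V* = {v ∈ V(G) : ℓ(x) ∈ T for every x ∈ Adj_G(v) ∪ {v}}. Then for every v ∈ V* there is exactly one σ_v ∈ Σ such that (v, σ_v) ∈ S. -/

import Mathlib

/-- An R-CSP instance: a finite simple directed graph (irreflexive and antisymmetric edge
set `E ⊆ V × V`), an alphabet `S`, a value alphabet `Υ = {1,…,m}` with `m > 0`, and for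
each edge `e = (u,v) ∈ E` two maps `π_{e,u}, π_{e,v} : S → {1,…,m}` (called `pifst e` and
`pisnd e` respectively). -/
structure RCSP (V S : Type) [Fintype V] [DecidableEq V] [Fintype S] [DecidableEq S] where
  E : Finset (V × V)
  ne_of_mem : ∀ e ∈ E, e.1 ≠ e.2
  antisymm : ∀ u v : V, (u, v) ∈ E → (v, u) ∉ E
  m : ℕ
  m_pos : 0 < m
  pifst : V × V → S → ℕ
  pisnd : V × V → S → ℕ
  pifst_pos : ∀ e ∈ E, ∀ σ : S, 1 ≤ pifst e σ
  pifst_le : ∀ e ∈ E, ∀ σ : S, pifst e σ ≤ m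
  pisnd_pos : ∀ e ∈ E, ∀ σ : S, 1 ≤ pisnd e σ
  pisnd_le : ∀ e ∈ E, ∀ σ : S, pisnd e σ ≤ m

namespace RCSP

variable {V S : Type} [Fintype V] [DecidableEq V] [Fintype S] [DecidableEq S]

/-- A partial assignment `φ : V → S ∪ {⊥}` is consistent if for every edge `e = (u,v)`
with both endpoints assigned, `π_{e,u}(φ u) = π_{e,v}(φ v)`. -/
def Consistent (P : RCSP V S) (φ : V → Option S) : Prop :=
  ∀ e ∈ P.E, ∀ a b : S, φ e.1 = some a → φ e.2 = some b → P.pifst e a = P.pisnd e b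

/-- The size of a partial assignment: the number of vertices assigned a value. -/
def size (φ : V → Option S) : ℕ := (Finset.univ.filter fun v : V => (φ v).isSome).card

/-- The set `Adj_G(v)` of edges incident to the vertex `v`. -/
def adj (P : RCSP V S) (v : V) : Finset (V × V) :=
  P.E.filter fun e => e.1 = v ∨ e.2 = v

/-- The set of constraints `D = V(G) ∪ E(G)`, as a finset of `V ⊕ (V × V)`. -/
def Dset (P : RCSP V S) : Finset (V ⊕ (V × V)) :=
  Finset.univ.image Sum.inl ∪ P.E.image Sum.inr

/-- The block `D_ℓ` of the partition of `D` determined by the index function `idx`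
(assigning to each constraint the index of its block). -/
def Dblock (P : RCSP V S) {r : ℕ} (idx : V ⊕ (V × V) → Fin r) (ℓ : Fin r) :
    Finset (V ⊕ (V × V)) :=
  P.Dset.filter fun j => idx j = ℓ

/-- `J(ℓ,v)`: the number of constraints in `D_ℓ` in which `v` participates, namely
`|Adj_G(v) ∩ D_ℓ|`, plus one if `v ∈ D_ℓ`. -/
def J (P : RCSP V S) {r : ℕ} (idx : V ⊕ (V × V) → Fin r) (ℓ : Fin r) (v : V) : ℕ :=
  ((P.adj v).filter fun e => idx (Sum.inr e) = ℓ).card +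
    if idx (Sum.inl v) = ℓ then 1 else 0

/-- `N_ℓ = Σ_{v ∈ V(G)} J(ℓ,v)`. -/
def N (P : RCSP V S) {r : ℕ} (idx : V ⊕ (V × V) → Fin r) (ℓ : Fin r) : ℕ :=
  ∑ v : V, P.J idx ℓ v

/-- The profit of a set of items: `p(v,σ) = Σ_{ℓ ∈ [r]} J(ℓ,v)`, summed over the set. -/
def profit (P : RCSP V S) {r : ℕ} (idx : V ⊕ (V × V) → Fin r)
    (Sol : Finset (V × S)) : ℕ :=
  ∑ i ∈ Sol, ∑ ℓ : Fin r, P.J idx ℓ i.1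

/-- `Q = 3 · F² · m · |V(G)| · |Σ|`. -/
def Q (P : RCSP V S) (F : ℕ) : ℕ :=
  3 * F ^ 2 * P.m * Fintype.card V * Fintype.card S

/-- `M = Q^{2F}`. -/
def Mbig (P : RCSP V S) (F : ℕ) : ℕ := P.Q F ^ (2 * F)

/-- The auxiliary weights `w_j(v,σ)` for constraints `j ∈ D`:
`w_v(v,σ) = m`; for an edge `e ∈ E`, `w_e(v,σ) = π_{e,v}(σ)` if `v` is the first endpoint
of `e`, and `w_e(v,σ) = m − π_{e,v}(σ)` if `v` is the second endpoint; all other weights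
vanish. -/
def ew (P : RCSP V S) : V ⊕ (V × V) → V × S → ℕ
  | Sum.inl u, (v, _) => if v = u then P.m else 0
  | Sum.inr e, (v, σ) =>
      if e ∈ P.E then
        if e.1 = v then P.pifst e σ else if e.2 = v then P.m - P.pisnd e σ else 0
      else 0

/-- The cost in dimension `(ℓ,1)`: `c_{(ℓ,1)}(i) = Σ_{j ∈ D_ℓ} w_j(i) · Q^{ord_ℓ(j)}`. -/
def cost1 (P : RCSP V S) (F : ℕ) {r : ℕ} (idx : V ⊕ (V × V) → Fin r)
    (ord : V ⊕ (V × V) → ℕ) (ℓ : Fin r) (i : V × S) : ℕ :=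
  ∑ j ∈ P.Dblock idx ℓ, P.ew j i * P.Q F ^ ord j

/-- The cost in dimension `(ℓ,2)`: `c_{(ℓ,2)}(v,σ) = M · J(ℓ,v) − c_{(ℓ,1)}(v,σ)`. -/
def cost2 (P : RCSP V S) (F : ℕ) {r : ℕ} (idx : V ⊕ (V × V) → Fin r)
    (ord : V ⊕ (V × V) → ℕ) (ℓ : Fin r) (i : V × S) : ℕ :=
  P.Mbig F * P.J idx ℓ i.1 - P.cost1 F idx ord ℓ i

/-- The budget in dimension `(ℓ,1)`: `B_{(ℓ,1)} = Σ_{j ∈ D_ℓ} m · Q^{ord_ℓ(j)}`. -/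
def budget1 (P : RCSP V S) (F : ℕ) {r : ℕ} (idx : V ⊕ (V × V) → Fin r)
    (ord : V ⊕ (V × V) → ℕ) (ℓ : Fin r) : ℕ :=
  ∑ j ∈ P.Dblock idx ℓ, P.m * P.Q F ^ ord j

/-- The budget in dimension `(ℓ,2)`: `B_{(ℓ,2)} = M · N_ℓ − B_{(ℓ,1)}`. -/
def budget2 (P : RCSP V S) (F : ℕ) {r : ℕ} (idx : V ⊕ (V × V) → Fin r)
    (ord : V ⊕ (V × V) → ℕ) (ℓ : Fin r) : ℕ :=
  P.Mbig F * P.N idx ℓ - P.budget1 F idx ord ℓ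

/-- A solution of the knapsack instance `I(Π,F)` produced by the dimension embedding
reduction: a set of items respecting the budgets in all `2r` dimensions. -/
def IsEmbedSolution (P : RCSP V S) (F : ℕ) {r : ℕ} (idx : V ⊕ (V × V) → Fin r)
    (ord : V ⊕ (V × V) → ℕ) (Sol : Finset (V × S)) : Prop :=
  (∀ ℓ : Fin r, ∑ i ∈ Sol, P.cost1 F idx ord ℓ i ≤ P.budget1 F idx ord ℓ) ∧
  (∀ ℓ : Fin r, ∑ i ∈ Sol, P.cost2 F idx ord ℓ i ≤ P.budget2 F idx ord ℓ)

/-- The index `ℓ ∈ [r]` is tight for `Sol` if `Σ_{(v,σ) ∈ Sol} J(ℓ,v) = N_ℓ`. -/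
def Tight (P : RCSP V S) {r : ℕ} (idx : V ⊕ (V × V) → Fin r)
    (Sol : Finset (V × S)) (ℓ : Fin r) : Prop :=
  ∑ i ∈ Sol, P.J idx ℓ i.1 = P.N idx ℓ

/-- `v ∈ V*`: every constraint `x ∈ Adj_G(v) ∪ {v}` lies in a tight block, i.e.
`ℓ(x) ∈ T` where `ℓ(x)` is the index of the block containing `x`. -/
def InVstar (P : RCSP V S) {r : ℕ} (idx : V ⊕ (V × V) → Fin r)
    (Sol : Finset (V × S)) (v : V) : Prop :=
  P.Tight idx Sol (idx (Sum.inl v)) ∧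
    ∀ e ∈ P.adj v, P.Tight idx Sol (idx (Sum.inr e))

/-- The hypotheses of the dimension embedding reduction: the constraint graph is
3-regular, `F ∈ [|V(G)|]`, the blocks `D_1,…,D_r` partition `D` (automatic, since `idx`
is a function on `D`) with `|D_ℓ| ≤ F`, and for each `ℓ` the map `ord` restricts to a
bijection `D_ℓ → {1,…,|D_ℓ|}`. -/
def EmbedSetting (P : RCSP V S) (F : ℕ) {r : ℕ} (idx : V ⊕ (V × V) → Fin r)
    (ord : V ⊕ (V × V) → ℕ) : Prop :=
  (∀ v : V, (P.adj v).card = 3) ∧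
  1 ≤ F ∧ F ≤ Fintype.card V ∧
  (∀ ℓ : Fin r, (P.Dblock idx ℓ).card ≤ F) ∧
  (∀ ℓ : Fin r, Set.BijOn ord (P.Dblock idx ℓ : Set (V ⊕ (V × V)))
    (Set.Icc 1 ((P.Dblock idx ℓ).card)))

end RCSP

/-- In the setting of the dimension embedding reduction, let `Sol` be a
solution of `I(Π,F)`, let `T` be the set of tight indices, and let
`V* = {v : ℓ(x) ∈ T for every x ∈ Adj_G(v) ∪ {v}}`.  Then for every `v ∈ V*` there is
exactly one `σ_v ∈ Σ` with `(v, σ_v) ∈ Sol`. -/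

private lemma nat_geom_aux (Q k : ℕ) (hQ : 1 ≤ Q) :
    (Q - 1) * ∑ t ∈ Finset.range k, Q ^ t = Q ^ k - 1 := by
  induction k with
  | zero => simp
  | succ k ih =>
    rw [Finset.sum_range_succ, Nat.mul_add, ih]
    have h1 : 1 ≤ Q ^ k := Nat.one_le_pow _ _ hQ
    have h2 : Q ^ k ≤ Q ^ (k + 1) := Nat.pow_le_pow_right hQ (by omega)
    have h3 : (Q - 1) * Q ^ k = Q ^ (k + 1) - Q ^ k := by
      rw [Nat.sub_mul, one_mul, pow_succ, mul_comm]
    omega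

private lemma low_digits_lt {α : Type*} (Q k : ℕ) (hQ : 1 ≤ Q) (B : Finset α) (e : α → ℕ)
    (he : Set.InjOn e B) (hek : ∀ j ∈ B, e j < k) (d : α → ℕ) (hd : ∀ j ∈ B, d j < Q) :
    ∑ j ∈ B, d j * Q ^ e j < Q ^ k := by
  have h1 : ∑ j ∈ B, d j * Q ^ e j ≤ (Q - 1) * ∑ j ∈ B, Q ^ e j := by
    rw [Finset.mul_sum]
    exact Finset.sum_le_sum fun j hj => Nat.mul_le_mul_right _ (by have := hd j hj; omega)
  have h2 : ∑ j ∈ B, Q ^ e j = ∑ t ∈ B.image e, Q ^ t :=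
    (Finset.sum_image (fun x hx y hy h => he hx hy h)).symm
  have h3 : B.image e ⊆ Finset.range k := by
    intro t ht
    obtain ⟨j, hj, rfl⟩ := Finset.mem_image.mp ht
    exact Finset.mem_range.mpr (hek j hj)
  have h4 : ∑ t ∈ B.image e, Q ^ t ≤ ∑ t ∈ Finset.range k, Q ^ t :=
    Finset.sum_le_sum_of_subset h3
  have h5 := nat_geom_aux Q k hQ
  have h6 : 1 ≤ Q ^ k := Nat.one_le_pow _ _ hQ
  calc ∑ j ∈ B, d j * Q ^ e j ≤ (Q - 1) * ∑ j ∈ B, Q ^ e j := h1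
    _ ≤ (Q - 1) * ∑ t ∈ Finset.range k, Q ^ t := by
        rw [h2]; exact Nat.mul_le_mul_left _ h4
    _ = Q ^ k - 1 := h5
    _ < Q ^ k := by omega

private lemma digit_extract {α : Type*} [DecidableEq α] (Q : ℕ) (hQ : 1 ≤ Q) (A : Finset α)
    (e : α → ℕ) (he : Set.InjOn e A) (d : α → ℕ) (hd : ∀ j ∈ A, d j < Q)
    (j0 : α) (hj0 : j0 ∈ A) :
    (∑ j ∈ A, d j * Q ^ e j) / Q ^ e j0 % Q = d j0 := by
  set k := e j0 with hk
  have hsplit : ∑ j ∈ A, d j * Q ^ e j = (∑ j ∈ A.erase j0, d j * Q ^ e j) + d j0 * Q ^ k :=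
    (Finset.sum_erase_add A _ hj0).symm
  have hne : ∀ j ∈ A.erase j0, e j ≠ k := by
    intro j hj hje
    exact (Finset.mem_erase.mp hj).1 (he (Finset.mem_of_mem_erase hj) hj0 hje)
  set B := (A.erase j0).filter (fun j => e j < k) with hB
  set C := (A.erase j0).filter (fun j => ¬ e j < k) with hC
  have hBC : (∑ j ∈ A.erase j0, d j * Q ^ e j) =
      (∑ j ∈ B, d j * Q ^ e j) + ∑ j ∈ C, d j * Q ^ e j :=
    (Finset.sum_filter_add_sum_filter_not _ _ _).symm
  have hX : ∑ j ∈ B, d j * Q ^ e j < Q ^ k := by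
    apply low_digits_lt Q k hQ B e
    · exact he.mono (fun x hx => Finset.mem_of_mem_erase (Finset.mem_filter.mp hx).1)
    · exact fun j hj => (Finset.mem_filter.mp hj).2
    · exact fun j hj => hd j (Finset.mem_of_mem_erase (Finset.mem_filter.mp hj).1)
  have hY : Q ^ (k + 1) ∣ ∑ j ∈ C, d j * Q ^ e j := by
    apply Finset.dvd_sum
    intro j hj
    have h1 : k + 1 ≤ e j := by
      have h2 := (Finset.mem_filter.mp hj).2
      have h3 := hne j (Finset.mem_filter.mp hj).1
      omega
    exact Dvd.dvd.mul_left (pow_dvd_pow Q h1) _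
  obtain ⟨Z, hZ⟩ := hY
  have htot : ∑ j ∈ A, d j * Q ^ e j
      = (∑ j ∈ B, d j * Q ^ e j) + Q ^ k * (d j0 + Q * Z) := by
    rw [hsplit, hBC, hZ]; ring
  rw [htot]
  have hpos : 0 < Q ^ k := Nat.pow_pos hQ
  rw [Nat.add_mul_div_left _ _ hpos, Nat.div_eq_of_lt hX, Nat.zero_add,
    Nat.add_mul_mod_self_left, Nat.mod_eq_of_lt (hd j0 hj0)]


theorem embed_unique_symbol
    {V S : Type} [Fintype V] [DecidableEq V] [Fintype S] [DecidableEq S]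
    (P : RCSP V S) (F : ℕ) {r : ℕ} (idx : V ⊕ (V × V) → Fin r)
    (ord : V ⊕ (V × V) → ℕ) (hset : P.EmbedSetting F idx ord)
    (Sol : Finset (V × S)) (hSol : P.IsEmbedSolution F idx ord Sol)
    (v : V) (hv : P.InVstar idx Sol v) :
    ∃! σ : S, (v, σ) ∈ Sol := by
    classical
  obtain ⟨hreg, hF1, hFV, hcardF, hbij⟩ := hset
  obtain ⟨hT, -⟩ := hv
  set ℓ := idx (Sum.inl v) with hℓdef
  have hvD : (Sum.inl v : V ⊕ (V × V)) ∈ P.Dblock idx ℓ := by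
    simp [RCSP.Dblock, RCSP.Dset, hℓdef]
  have hidxv : idx (Sum.inl v) = ℓ := rfl
  have hJv : 1 ≤ P.J idx ℓ v := by
    unfold RCSP.J
    rw [if_pos hidxv]
    omega
  cases isEmpty_or_nonempty S with
  | inl hS =>
    exfalso
    have hSol0 : Sol = ∅ := Finset.eq_empty_of_forall_notMem (by
      rintro ⟨a, b⟩ _; exact hS.elim b)
    have hN : P.N idx ℓ = 0 := by rw [← hT, hSol0]; simp
    have h1 : P.J idx ℓ v ≤ P.N idx ℓ :=
      Finset.single_le_sum (f := fun w => P.J idx ℓ w) (fun _ _ => Nat.zero_le _)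
        (Finset.mem_univ v)
    omega
  | inr hS =>
  have hV1 : 1 ≤ Fintype.card V := Fintype.card_pos_iff.mpr ⟨v⟩
  have hS1 : 1 ≤ Fintype.card S := Fintype.card_pos
  have hm := P.m_pos
  have hQdef : P.Q F = 3 * F ^ 2 * P.m * Fintype.card V * Fintype.card S := rfl
  have hF2 : 1 ≤ F ^ 2 := Nat.one_le_pow _ _ (by omega)
  have hQbig : P.m * (Fintype.card V * Fintype.card S) < P.Q F := by
    have e1 : P.Q F = (3 * F ^ 2) * (P.m * (Fintype.card V * Fintype.card S)) := by
      rw [hQdef]; ring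
    have h2 : 0 < P.m * (Fintype.card V * Fintype.card S) := by positivity
    have h3 : 1 < 3 * F ^ 2 := by omega
    calc P.m * (Fintype.card V * Fintype.card S)
        = 1 * (P.m * (Fintype.card V * Fintype.card S)) := (one_mul _).symm
      _ < (3 * F ^ 2) * (P.m * (Fintype.card V * Fintype.card S)) :=
          mul_lt_mul_of_pos_right h3 h2
      _ = P.Q F := e1.symm
  have hmQ : P.m < P.Q F := by
    have : P.m ≤ P.m * (Fintype.card V * Fintype.card S) := Nat.le_mul_of_pos_right _ (by positivity)
    omega
  have hQ1 : 1 ≤ P.Q F := by omega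
  have hordmem : ∀ j ∈ P.Dblock idx ℓ, 1 ≤ ord j ∧ ord j ≤ F := by
    intro j hj
    have h1 := (hbij ℓ).mapsTo hj
    have hc := hcardF ℓ
    simp only [Set.mem_Icc] at h1
    omega
  have hordinj : Set.InjOn ord (P.Dblock idx ℓ) := (hbij ℓ).injOn
  have hew : ∀ (j : V ⊕ (V × V)) (i : V × S), P.ew j i ≤ P.m := by
    rintro (u | e) ⟨w, σ⟩
    · simp only [RCSP.ew]; split <;> omega
    · simp only [RCSP.ew]
      split
      · next hE =>
        split
        · next h1 => exact P.pifst_le e hE σ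
        · split
          · exact Nat.sub_le _ _
          · omega
      · omega
  have hterm : ∀ j ∈ P.Dblock idx ℓ, ∀ c : ℕ, c ≤ P.m → c * P.Q F ^ ord j ≤ P.Mbig F := by
    intro j hj c hc
    have h1 : c * P.Q F ^ ord j ≤ P.Q F * P.Q F ^ F :=
      Nat.mul_le_mul (by omega) (Nat.pow_le_pow_right hQ1 (hordmem j hj).2)
    have h2 : P.Q F * P.Q F ^ F = P.Q F ^ (F + 1) := by rw [pow_succ, mul_comm]
    have h3 : P.Q F ^ (F + 1) ≤ P.Q F ^ (2 * F) := Nat.pow_le_pow_right hQ1 (by omega)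
    calc c * P.Q F ^ ord j ≤ P.Q F ^ (F + 1) := by omega
      _ ≤ P.Q F ^ (2 * F) := h3
  -- Step A: per-item bound
  have hA : ∀ i : V × S, P.cost1 F idx ord ℓ i ≤ P.Mbig F * P.J idx ℓ i.1 := by
    intro i
    have h1 : P.cost1 F idx ord ℓ i
        = ∑ j ∈ (P.Dblock idx ℓ).filter (fun j => P.ew j i ≠ 0), P.ew j i * P.Q F ^ ord j := by
      unfold RCSP.cost1
      exact (Finset.sum_filter_of_ne (fun j _ h => by
        intro h0; exact h (by rw [h0, Nat.zero_mul]))).symm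
    have hsupp : (P.Dblock idx ℓ).filter (fun j => P.ew j i ≠ 0) ⊆
        ((P.adj i.1).filter (fun e => idx (Sum.inr e) = ℓ)).image Sum.inr ∪
          (if idx (Sum.inl i.1) = ℓ then ({Sum.inl i.1} : Finset (V ⊕ (V × V))) else ∅) := by
      intro j hj
      obtain ⟨hjD, hjne⟩ := Finset.mem_filter.mp hj
      obtain ⟨hjDset, hjidx⟩ := Finset.mem_filter.mp hjD
      obtain ⟨w, σ⟩ := i
      rcases j with u | e
      · have hwu : w = u := by
          by_contra h
          exact hjne (by simp [RCSP.ew, h])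
      
        subst hwu
        apply Finset.mem_union_right
        rw [if_pos hjidx]
        exact Finset.mem_singleton_self _
      · apply Finset.mem_union_left
        have hEe : e ∈ P.E ∧ (e.1 = w ∨ e.2 = w) := by
          by_contra h
          apply hjne
          simp only [RCSP.ew]
          push_neg at h
          by_cases hE : e ∈ P.E
          · have h2 := h hE
            rw [if_pos hE, if_neg (by tauto), if_neg (by tauto)]
          · rw [if_neg hE]
        apply Finset.mem_image_of_mem
        rw [Finset.mem_filter]
        refine ⟨?_, hjidx⟩
        unfold RCSP.adj
        rw [Finset.mem_filter]
        exact ⟨hEe.1, hEe.2⟩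
    have hcard : ((P.Dblock idx ℓ).filter (fun j => P.ew j i ≠ 0)).card ≤ P.J idx ℓ i.1 := by
      refine le_trans (Finset.card_le_card hsupp) ?_
      refine le_trans (Finset.card_union_le _ _) ?_
      unfold RCSP.J
      have h2 : (((P.adj i.1).filter (fun e => idx (Sum.inr e) = ℓ)).image
          (Sum.inr : (V × V) → V ⊕ (V × V))).card
          = ((P.adj i.1).filter (fun e => idx (Sum.inr e) = ℓ)).card :=
        Finset.card_image_of_injective _ Sum.inr_injective
      have h3 : (if idx (Sum.inl i.1) = ℓ then ({Sum.inl i.1} : Finset (V ⊕ (V × V)))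
          else ∅).card = if idx (Sum.inl i.1) = ℓ then 1 else 0 := by
        split <;> simp
      omega
    calc P.cost1 F idx ord ℓ i
        = ∑ j ∈ (P.Dblock idx ℓ).filter (fun j => P.ew j i ≠ 0), P.ew j i * P.Q F ^ ord j := h1
      _ ≤ ((P.Dblock idx ℓ).filter (fun j => P.ew j i ≠ 0)).card * P.Mbig F := by
          rw [← smul_eq_mul]
          exact Finset.sum_le_card_nsmul _ _ _ (fun j hj =>
            hterm j (Finset.mem_of_mem_filter j hj) _ (hew j i))
      _ ≤ P.J idx ℓ i.1 * P.Mbig F := Nat.mul_le_mul_right _ hcard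
      _ = P.Mbig F * P.J idx ℓ i.1 := Nat.mul_comm _ _
  -- Step B: the first-dimension budget is exactly attained
  have hsumJ : ∑ i ∈ Sol, P.Mbig F * P.J idx ℓ i.1 = P.Mbig F * P.N idx ℓ := by
    rw [← Finset.mul_sum, hT]
  have hsumc1leMN : ∑ i ∈ Sol, P.cost1 F idx ord ℓ i ≤ P.Mbig F * P.N idx ℓ := by
    rw [← hsumJ]
    exact Finset.sum_le_sum fun i _ => hA i
  have hc2 := hSol.2 ℓ
  have hc2' : ∑ i ∈ Sol, P.cost2 F idx ord ℓ i
      = P.Mbig F * P.N idx ℓ - ∑ i ∈ Sol, P.cost1 F idx ord ℓ i := by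
    unfold RCSP.cost2
    rw [Finset.sum_tsub_distrib Sol (fun i _ => hA i), hsumJ]
  -- |Dblock| ≤ N
  have hDN : (P.Dblock idx ℓ).card ≤ P.N idx ℓ := by
    have hDsplit : P.Dblock idx ℓ =
        ((Finset.univ.filter (fun w : V => idx (Sum.inl w) = ℓ)).image Sum.inl) ∪
        ((P.E.filter (fun e => idx (Sum.inr e) = ℓ)).image Sum.inr) := by
      ext j
      rcases j with u | e <;>
        simp [RCSP.Dblock, RCSP.Dset, Finset.mem_filter, Finset.mem_union, and_comm]
    have hc1 : ((Finset.univ.filter (fun w : V => idx (Sum.inl w) = ℓ)).image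
        (Sum.inl : V → V ⊕ (V × V))).card
        = ∑ w : V, if idx (Sum.inl w) = ℓ then 1 else 0 := by
      rw [Finset.card_image_of_injective _ Sum.inl_injective, Finset.card_filter]
    have hsub : P.E.filter (fun e => idx (Sum.inr e) = ℓ) ⊆
        Finset.univ.biUnion (fun w : V =>
          (P.adj w).filter (fun e => idx (Sum.inr e) = ℓ)) := by
      intro e he
      obtain ⟨heE, heidx⟩ := Finset.mem_filter.mp he
      apply Finset.mem_biUnion.mpr
      refine ⟨e.1, Finset.mem_univ _, ?_⟩
      rw [Finset.mem_filter]
      refine ⟨?_, heidx⟩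
      unfold RCSP.adj
      rw [Finset.mem_filter]
      exact ⟨heE, Or.inl rfl⟩
    have hc2c : ((P.E.filter (fun e => idx (Sum.inr e) = ℓ)).image
        (Sum.inr : (V × V) → V ⊕ (V × V))).card
        ≤ ∑ w : V, ((P.adj w).filter (fun e => idx (Sum.inr e) = ℓ)).card := by
      rw [Finset.card_image_of_injective _ Sum.inr_injective]
      exact le_trans (Finset.card_le_card hsub) (Finset.card_biUnion_le)
    have hNsplit : P.N idx ℓ = (∑ w : V, ((P.adj w).filter
        (fun e => idx (Sum.inr e) = ℓ)).card)
        + ∑ w : V, if idx (Sum.inl w) = ℓ then 1 else 0 := by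
      unfold RCSP.N RCSP.J
      rw [← Finset.sum_add_distrib]
    have := Finset.card_union_le
      ((Finset.univ.filter (fun w : V => idx (Sum.inl w) = ℓ)).image Sum.inl)
      ((P.E.filter (fun e => idx (Sum.inr e) = ℓ)).image Sum.inr)
    rw [hDsplit]
    omega
  have hB1le : P.budget1 F idx ord ℓ ≤ P.Mbig F * P.N idx ℓ := by
    have h1 : P.budget1 F idx ord ℓ ≤ (P.Dblock idx ℓ).card * P.Mbig F := by
      rw [← smul_eq_mul]
      exact Finset.sum_le_card_nsmul _ _ _ (fun j hj => hterm j hj _ le_rfl)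
    calc P.budget1 F idx ord ℓ ≤ (P.Dblock idx ℓ).card * P.Mbig F := h1
      _ ≤ P.N idx ℓ * P.Mbig F := Nat.mul_le_mul_right _ hDN
      _ = P.Mbig F * P.N idx ℓ := Nat.mul_comm _ _
  have hEq : ∑ i ∈ Sol, P.cost1 F idx ord ℓ i = P.budget1 F idx ord ℓ := by
    have h1 := hSol.1 ℓ
    have h2 : P.budget2 F idx ord ℓ
        = P.Mbig F * P.N idx ℓ - P.budget1 F idx ord ℓ := rfl
    rw [hc2', h2] at hc2
    omega
  -- Step C: digit extraction
  have hswap : ∑ i ∈ Sol, P.cost1 F idx ord ℓ i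
      = ∑ j ∈ P.Dblock idx ℓ, (∑ i ∈ Sol, P.ew j i) * P.Q F ^ ord j := by
    unfold RCSP.cost1
    rw [Finset.sum_comm]
    exact Finset.sum_congr rfl fun j _ => (Finset.sum_mul _ _ _).symm
  have hdlt : ∀ j ∈ P.Dblock idx ℓ, (∑ i ∈ Sol, P.ew j i) < P.Q F := by
    intro j _
    have h1 : ∑ i ∈ Sol, P.ew j i ≤ ∑ _i ∈ Sol, P.m :=
      Finset.sum_le_sum fun i _ => hew j i
    have h2 : (∑ _i ∈ Sol, P.m) = Sol.card * P.m := by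
      rw [Finset.sum_const, smul_eq_mul]
    have h3 : Sol.card ≤ Fintype.card V * Fintype.card S := by
      have := Finset.card_le_univ Sol
      rwa [Fintype.card_prod] at this
    have h4 : Sol.card * P.m ≤ (Fintype.card V * Fintype.card S) * P.m :=
      Nat.mul_le_mul_right _ h3
    have h5 : (Fintype.card V * Fintype.card S) * P.m
        = P.m * (Fintype.card V * Fintype.card S) := Nat.mul_comm _ _
    omega
  have hd1 := digit_extract (P.Q F) hQ1 (P.Dblock idx ℓ) ord hordinj
    (fun j => ∑ i ∈ Sol, P.ew j i) hdlt (Sum.inl v) hvD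
  have hd2 := digit_extract (P.Q F) hQ1 (P.Dblock idx ℓ) ord hordinj
    (fun _ => P.m) (fun _ _ => hmQ) (Sum.inl v) hvD
  have hd1' : (∑ j ∈ P.Dblock idx ℓ, (∑ i ∈ Sol, P.ew j i) * P.Q F ^ ord j)
      / P.Q F ^ ord (Sum.inl v) % P.Q F = ∑ i ∈ Sol, P.ew (Sum.inl v) i := hd1
  have hd2' : (∑ j ∈ P.Dblock idx ℓ, P.m * P.Q F ^ ord j)
      / P.Q F ^ ord (Sum.inl v) % P.Q F = P.m := hd2
  have hkey : ∑ i ∈ Sol, P.ew (Sum.inl v) i = P.m := by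
    have hb1 : P.budget1 F idx ord ℓ = ∑ j ∈ P.Dblock idx ℓ, P.m * P.Q F ^ ord j := rfl
    rw [← hd1', ← hd2', ← hswap, hEq, hb1]
  -- Step D: conclude
  have hewv : ∀ i : V × S, P.ew (Sum.inl v) i = if i.1 = v then P.m else 0 := by
    rintro ⟨w, σ⟩; rfl
  have hfilt : (Sol.filter (fun i => i.1 = v)).card * P.m = P.m := by
    have h1 : ∑ i ∈ Sol, P.ew (Sum.inl v) i
        = ∑ i ∈ Sol.filter (fun i => i.1 = v), P.m := by
      rw [Finset.sum_filter]
      exact Finset.sum_congr rfl fun i _ => hewv i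
    rw [h1, Finset.sum_const, smul_eq_mul] at hkey
    exact hkey
  have hcard1 : (Sol.filter (fun i => i.1 = v)).card = 1 :=
    Nat.eq_of_mul_eq_mul_right hm (hfilt.trans (Nat.one_mul P.m).symm)
  obtain ⟨⟨a1, a2⟩, ha⟩ := Finset.card_eq_one.mp hcard1
  have haS : ((a1, a2) : V × S) ∈ Sol.filter (fun i => i.1 = v) := by
    rw [ha]; exact Finset.mem_singleton_self _
  obtain ⟨haSol, hav⟩ := Finset.mem_filter.mp haS
  have hav' : a1 = v := hav
  refine ⟨a2, ?_, ?_⟩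
  · show (v, a2) ∈ Sol
    rwa [← hav']
  intro σ hσ
  have hmem : ((v, σ) : V × S) ∈ Sol.filter (fun i => i.1 = v) :=
    Finset.mem_filter.mpr ⟨hσ, rfl⟩
  rw [ha, Finset.mem_singleton] at hmem
  exact (Prod.ext_iff.mp hmem).2
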